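/- In the space of 3×3 complex matrices, let E_ij denote the matrix units, let G := E₁₃ + E₂₂ + E₃₁, and define the involution X† := G·conj(Xᵀ)·G. Let 𝔥 := span_ℂ{E₁₃, E₁₂, E₂₃, E₂₂} (the four-dimensional Hudson–Parthasarathy Itô algebra, with E₁₃ representing d_t). If S ⊆ 𝔥 is a ℂ-linear subspace of dimension 3 which contains E₁₃ and is closed under matrix multiplication and under the involution †, then S = span_ℂ{E₁₃, E₁₂, E₂₃}; i.e., the only three-dimensional ⋆-subalgebra of the four-dimensional HP algebra containing d_t is the vacuum Brownian algebra generated by the creation and annihilation elements. -/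

import Mathlib

open Matrix

noncomputable def EE (i j : Fin 3) : Matrix (Fin 3) (Fin 3) ℂ := single i j 1

def PP (X : Matrix (Fin 3) (Fin 3) ℂ) : Prop :=
  X 0 0 = 0 ∧ X 1 0 = 0 ∧ X 2 0 = 0 ∧ X 2 1 = 0 ∧ X 2 2 = 0

lemma decompP {X : Matrix (Fin 3) (Fin 3) ℂ} (h : PP X) :
    X = X 0 2 • EE 0 2 + X 0 1 • EE 0 1 + X 1 2 • EE 1 2 + X 1 1 • EE 1 1 := by
  obtain ⟨h1,h2,h3,h4,h5⟩ := h
  ext i j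
  fin_cases i <;> fin_cases j <;> simp [EE, single, *]

lemma spanPP {X : Matrix (Fin 3) (Fin 3) ℂ}
    (h : X ∈ Submodule.span ℂ {EE 0 2, EE 0 1, EE 1 2, EE 1 1}) : PP X := by
  induction h using Submodule.span_induction with
  | mem x hx =>
    rcases hx with h|h|h|h <;> subst h <;>
      exact ⟨by simp [EE], by simp [EE], by simp [EE], by simp [EE], by simp [EE]⟩
  | zero => exact ⟨rfl, rfl, rfl, rfl, rfl⟩
  | add x y _ _ hx hy =>
    obtain ⟨a1,a2,a3,a4,a5⟩ := hx; obtain ⟨b1,b2,b3,b4,b5⟩ := hy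
    exact ⟨by simp [a1,b1], by simp [a2,b2], by simp [a3,b3], by simp [a4,b4], by simp [a5,b5]⟩
  | smul c x _ hx =>
    obtain ⟨a1,a2,a3,a4,a5⟩ := hx
    exact ⟨by simp [a1], by simp [a2], by simp [a3], by simp [a4], by simp [a5]⟩

lemma span3_11 {X : Matrix (Fin 3) (Fin 3) ℂ}
    (h : X ∈ Submodule.span ℂ {EE 0 2, EE 0 1, EE 1 2}) : X 1 1 = 0 := by
  induction h using Submodule.span_induction with
  | mem x hx => rcases hx with h|h|h <;> subst h <;> simp [EE]
  | zero => rfl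
  | add x y _ _ hx hy => simp [hx, hy]
  | smul c x _ hx => simp [hx]

lemma mulPP {X Y : Matrix (Fin 3) (Fin 3) ℂ} (hX : PP X) (hY : PP Y) :
    X * Y = (X 0 1 * Y 1 2) • EE 0 2 + (X 0 1 * Y 1 1) • EE 0 1
      + (X 1 1 * Y 1 2) • EE 1 2 + (X 1 1 * Y 1 1) • EE 1 1 := by
  obtain ⟨a1,a2,a3,a4,a5⟩ := hX; obtain ⟨b1,b2,b3,b4,b5⟩ := hY
  ext i j
  fin_cases i <;> fin_cases j <;>
    simp [EE, mul_apply, Fin.sum_univ_three, single, *]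

noncomputable def Gm : Matrix (Fin 3) (Fin 3) ℂ :=
  single 0 2 1 + single 1 1 1 + single 2 0 1

lemma starEnt (X : Matrix (Fin 3) (Fin 3) ℂ) :
    (Gm * X.conjTranspose * Gm) 0 1 = starRingEnd ℂ (X 1 2) ∧
    (Gm * X.conjTranspose * Gm) 1 2 = starRingEnd ℂ (X 0 1) ∧
    (Gm * X.conjTranspose * Gm) 1 1 = starRingEnd ℂ (X 1 1) := by
  refine ⟨?_, ?_, ?_⟩ <;>
    simp [Gm, mul_apply, Fin.sum_univ_three, single, conjTranspose_apply]

lemma li3 : LinearIndependent ℂ ![EE 0 2, EE 0 1, EE 1 2] := by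
  rw [Fintype.linearIndependent_iff]
  intro g hg
  have h02 := congrFun (congrFun hg 0) 2
  have h01 := congrFun (congrFun hg 0) 1
  have h12 := congrFun (congrFun hg 1) 2
  simp [Fin.sum_univ_three, EE, single] at h02 h01 h12
  intro i; fin_cases i <;> assumption

lemma frk3 : Module.finrank ℂ (Submodule.span ℂ ({EE 0 2, EE 0 1, EE 1 2} :
    Set (Matrix (Fin 3) (Fin 3) ℂ))) = 3 := by
  have h := finrank_span_eq_card li3
  have he : Set.range ![EE 0 2, EE 0 1, EE 1 2] = {EE 0 2, EE 0 1, EE 1 2} := by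
    rw [show ({EE 0 2, EE 0 1, EE 1 2} : Set _) = {EE 1 2, EE 0 1, EE 0 2} by
      ext x; simp; tauto]
    simp [Matrix.range_cons, Matrix.range_empty]
  rw [he] at h
  simpa using h

theorem hp_unique_three_dimensional_star_subalgebra
    (S : Submodule ℂ (Matrix (Fin 3) (Fin 3) ℂ))
    (hsub : S ≤ Submodule.span ℂ
      {Matrix.single 0 2 (1 : ℂ), Matrix.single 0 1 (1 : ℂ),
        Matrix.single 1 2 (1 : ℂ), Matrix.single 1 1 (1 : ℂ)})
    (hdim : Module.finrank ℂ S = 3)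
    (hdt : Matrix.single 0 2 (1 : ℂ) ∈ S)
    (hmul : ∀ X Y : Matrix (Fin 3) (Fin 3) ℂ, X ∈ S → Y ∈ S → X * Y ∈ S)
    (hstar : ∀ X : Matrix (Fin 3) (Fin 3) ℂ, X ∈ S →
      (Matrix.single 0 2 (1 : ℂ) + Matrix.single 1 1 (1 : ℂ)
          + Matrix.single 2 0 (1 : ℂ)) * X.conjTranspose *
        (Matrix.single 0 2 (1 : ℂ) + Matrix.single 1 1 (1 : ℂ)
          + Matrix.single 2 0 (1 : ℂ)) ∈ S) :
    S = Submodule.span ℂ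
      {Matrix.single 0 2 (1 : ℂ), Matrix.single 0 1 (1 : ℂ),
        Matrix.single 1 2 (1 : ℂ)} := by
  classical
  show S = Submodule.span ℂ ({EE 0 2, EE 0 1, EE 1 2} : Set _)
  have hdt' : EE 0 2 ∈ S := hdt
  have hP : ∀ X ∈ S, PP X := fun X hX =>
    spanPP (show X ∈ Submodule.span ℂ {EE 0 2, EE 0 1, EE 1 2, EE 1 1} from hsub hX)
  -- extraction helper
  have hext : ∀ (a b : ℂ) (m : Matrix (Fin 3) (Fin 3) ℂ), b ≠ 0 →
      a • EE 0 2 + b • m ∈ S → m ∈ S := by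
    intro a b m hb h
    have hm : m = b⁻¹ • ((a • EE 0 2 + b • m) - a • EE 0 2) := by
      rw [add_sub_cancel_left, smul_smul, inv_mul_cancel₀ hb, one_smul]
    rw [hm]
    exact S.smul_mem _ (S.sub_mem h (S.smul_mem _ hdt'))
  -- key claim: the E₂₂ coefficient vanishes on S
  have key : ∀ X ∈ S, X 1 1 = 0 := by
    by_contra hc
    push_neg at hc
    obtain ⟨X, hXS, hd⟩ := hc
    have hPX := hP X hXS
    -- find Y outside span{E13, X}
    obtain ⟨Y, hYS, hYn⟩ : ∃ Y ∈ S, Y ∉ Submodule.span ℂ ({EE 0 2, X} : Set _) := by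
      by_contra h
      push_neg at h
      have hle : S ≤ Submodule.span ℂ ({EE 0 2, X} : Set _) := h
      have h1 : Module.finrank ℂ S ≤
          Module.finrank ℂ (Submodule.span ℂ ({EE 0 2, X} : Set _)) :=
        Submodule.finrank_mono hle
      have h2 : Module.finrank ℂ (Submodule.span ℂ ({EE 0 2, X} :
          Set (Matrix (Fin 3) (Fin 3) ℂ))) ≤ 2 := by
        have h := finrank_span_le_card (R := ℂ) ({EE 0 2, X} : Set (Matrix (Fin 3) (Fin 3) ℂ))
        refine h.trans ?_
        have hs : ({EE 0 2, X} : Set _).toFinset ⊆ {EE 0 2, X} := by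
          intro a ha; simpa using (Set.mem_toFinset.mp ha)
        calc _ ≤ _ := Finset.card_le_card hs
          _ ≤ 2 := (Finset.card_insert_le _ _).trans (by simp)
      omega
    set Y' := Y - (Y 1 1 / X 1 1) • X with hY'def
    have hY'S : Y' ∈ S := S.sub_mem hYS (S.smul_mem _ hXS)
    have hPY' := hP Y' hY'S
    have hY'11 : Y' 1 1 = 0 := by
      simp only [hY'def, Matrix.sub_apply, Matrix.smul_apply, smul_eq_mul]
      field_simp
      simp
    have hnboth : ¬ (Y' 0 1 = 0 ∧ Y' 1 2 = 0) := by
      rintro ⟨h1, h2⟩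
      apply hYn
      have hY'eq : Y' = Y' 0 2 • EE 0 2 := by
        have hdec := decompP hPY'
        rw [h1, h2, hY'11] at hdec
        simpa using hdec
      have hYeq : Y = Y' 0 2 • EE 0 2 + (Y 1 1 / X 1 1) • X := by
        rw [← hY'eq, hY'def, sub_add_cancel]
      rw [hYeq]
      exact Submodule.add_mem _
        (Submodule.smul_mem _ _ (Submodule.subset_span (by simp)))
        (Submodule.smul_mem _ _ (Submodule.subset_span (by simp)))
    -- the star of Y'
    set Z := Gm * Y'.conjTranspose * Gm with hZdef
    have hZS : Z ∈ S := hstar Y' hY'S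
    have hPZ := hP Z hZS
    obtain ⟨hZ01, hZ12, hZ11⟩ := starEnt Y'
    rw [← hZdef] at hZ01 hZ12 hZ11
    rw [hY'11, map_zero] at hZ11
    have hboth : EE 0 1 ∈ S ∧ EE 1 2 ∈ S := by
      rcases not_and_or.mp hnboth with h | h
      · constructor
        · -- Y' * X  gives E12
          have hm := hmul Y' X hY'S hXS
          rw [mulPP hPY' hPX, hY'11] at hm
          simp only [zero_mul, zero_smul, add_zero] at hm
          exact hext _ _ _ (mul_ne_zero h hd) hm
        · -- X * Z gives E23
          have hm := hmul X Z hXS hZS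
          rw [mulPP hPX hPZ, hZ11] at hm
          simp only [mul_zero, zero_smul, add_zero] at hm
          have hZ12ne : Z 1 2 ≠ 0 := by
            rw [hZ12]; simpa using h
          exact hext _ _ _ (mul_ne_zero hd hZ12ne) hm
      · constructor
        · -- Z * X gives E12
          have hm := hmul Z X hZS hXS
          rw [mulPP hPZ hPX, hZ11] at hm
          simp only [zero_mul, zero_smul, add_zero] at hm
          have hZ01ne : Z 0 1 ≠ 0 := by
            rw [hZ01]; simpa using h
          exact hext _ _ _ (mul_ne_zero hZ01ne hd) hm
        · -- X * Y' gives E23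
          have hm := hmul X Y' hXS hY'S
          rw [mulPP hPX hPY', hY'11] at hm
          simp only [mul_zero, zero_smul, add_zero] at hm
          exact hext _ _ _ (mul_ne_zero hd h) hm
    obtain ⟨h01S, h12S⟩ := hboth
    have hBle : Submodule.span ℂ ({EE 0 2, EE 0 1, EE 1 2} : Set _) ≤ S := by
      rw [Submodule.span_le]
      rintro x (rfl | rfl | rfl)
      · exact hdt'
      · exact h01S
      · exact h12S
    have hBeq : Submodule.span ℂ ({EE 0 2, EE 0 1, EE 1 2} : Set _) = S :=
      Submodule.eq_of_le_of_finrank_le hBle (by rw [frk3, hdim])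
    have he22 : EE 1 1 ∈ S := by
      have hsum : X 1 1 • EE 1 1 = X - X 0 2 • EE 0 2 - X 0 1 • EE 0 1 - X 1 2 • EE 1 2 := by
        nth_rewrite 2 [decompP hPX]
        abel
      have hmem : X 1 1 • EE 1 1 ∈ S := by
        rw [hsum]
        exact S.sub_mem (S.sub_mem (S.sub_mem hXS (S.smul_mem _ hdt'))
          (S.smul_mem _ h01S)) (S.smul_mem _ h12S)
      have heq : EE 1 1 = (X 1 1)⁻¹ • (X 1 1 • EE 1 1) := by
        rw [smul_smul, inv_mul_cancel₀ hd, one_smul]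
      rw [heq]
      exact S.smul_mem _ hmem
    have : (EE 1 1 : Matrix (Fin 3) (Fin 3) ℂ) 1 1 = 0 :=
      span3_11 (hBeq ▸ he22)
    simp [EE] at this
  -- conclude
  have hle : S ≤ Submodule.span ℂ ({EE 0 2, EE 0 1, EE 1 2} : Set _) := by
    intro X hX
    have hPX := hP X hX
    have h11 := key X hX
    rw [decompP hPX, h11, zero_smul, add_zero]
    exact Submodule.add_mem _ (Submodule.add_mem _
      (Submodule.smul_mem _ _ (Submodule.subset_span (by simp)))
      (Submodule.smul_mem _ _ (Submodule.subset_span (by simp))))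
      (Submodule.smul_mem _ _ (Submodule.subset_span (by simp)))
  exact Submodule.eq_of_le_of_finrank_le hle (by rw [frk3, hdim])
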